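/- arXiv:2204.03365 — 2 statements merged into one kernel-verified Lean document; each statement's English description precedes it below -/
import Mathlib

section
/- For all (n,i), (m,j) ∈ S with (n,i) < (m,j) in the lexicographic order and every f ∈ H[x], ω_{s_{n,i},δ(n,i)}(f) ≤ ω_{s_{m,j},δ(m,j)}(f) ≤ v(f(s)). Moreover the first inequality is strict for f = x − s_{m,j}: ω_{s_{n,i},δ(n,i)}(x − s_{m,j}) = δ(n,i) < δ(m,j) = v(s − s_{m,j}); in particular the family (ω_{s_{n,i},δ(n,i)})_{(n,i)∈S} is strictly increasing along S and bounded above by the map f ↦ v(f(s)). -/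
/-!
Common setup: `p` a prime, `F` an algebraic closure of `𝔽_p`, `H = F((t^ℚ))` the Hahn series
field with its canonical additive valuation `v` (minimum of the support), the Newton–Puiseux
subfield `K ⊆ H`, the elements `s_n`, the series `s = ∑ tⁿ·s_n`, the truncations `s_{n,i}`,
the rationals `δ(n,i) = n - 1/p^(i+1)`, and the depth-zero valuations `ω_{a,δ}`.
-/

open Polynomial HahnSeries

variable (p : ℕ) [Fact p.Prime]

/-- `F`, an algebraic closure of `𝔽_p`. -/
abbrev Fbar : Type := AlgebraicClosure (ZMod p)

/-- The Hahn series field `H = F((t^ℚ))`. -/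
abbrev H : Type := HahnSeries ℚ (Fbar p)

/-- The additive valuation `v(f) = min (supp f)`, with `v 0 = ∞`. -/
noncomputable def v (f : H p) : WithTop ℚ := f.orderTop

/-- The exponent `-1/p^(j+1)`. -/
def expo (j : ℕ) : ℚ := -((p : ℚ) ^ (j + 1))⁻¹

lemma one_lt_p : (1 : ℚ) < p := by
  exact_mod_cast (Fact.out : p.Prime).one_lt

lemma expo_mono : Monotone (expo p) := by
  intro j k hjk
  have hp : (1 : ℚ) < p := one_lt_p p
  have h1 : (0 : ℚ) < (p : ℚ) ^ (j + 1) := pow_pos (lt_trans one_pos hp) _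
  have h2 : (p : ℚ) ^ (j + 1) ≤ (p : ℚ) ^ (k + 1) :=
    pow_le_pow_right₀ (le_of_lt hp) (by omega)
  have := inv_anti₀ h1 h2
  simp only [expo, neg_le_neg_iff]
  linarith

lemma isPWO_univ_nat : (Set.univ : Set ℕ).IsPWO :=
  (Set.isWF_univ_iff.2 (inferInstance : WellFoundedLT ℕ)).isPWO

-- `s_n = ∑_{j ≥ n} C(j,n)·t^(-1/p^(j+1))`, where `C(j,n)` is `j.choose n` reduced mod `p`.
open Classical in
noncomputable def sn (n : ℕ) : H p where
  coeff q := if h : ∃ j : ℕ, n ≤ j ∧ q = expo p j then (Nat.choose h.choose n : Fbar p) else 0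
  isPWO_support' := by
    apply ((isPWO_univ_nat.image_of_monotone (expo_mono p)).mono)
    intro q hq
    simp only [Function.mem_support] at hq
    have h : ∃ j : ℕ, n ≤ j ∧ q = expo p j := by
      by_contra h
      rw [dif_neg h] at hq
      exact hq rfl
    obtain ⟨j, _, rfl⟩ := h
    exact ⟨j, Set.mem_univ j, rfl⟩

-- `s = ∑_{n ≥ 0} tⁿ·s_n`, i.e. the series with coefficient `C(j,n)` at `n - 1/p^(j+1)`.
open Classical in
noncomputable def sH : H p where
  coeff q := if h : ∃ nj : ℕ × ℕ, nj.1 ≤ nj.2 ∧ q = (nj.1 : ℚ) + expo p nj.2 then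
      (Nat.choose h.choose.2 h.choose.1 : Fbar p) else 0
  isPWO_support' := by
    have hmono : Monotone (fun nj : ℕ × ℕ => (nj.1 : ℚ) + expo p nj.2) := by
      intro a b hab
      exact add_le_add (by exact_mod_cast hab.1) (expo_mono p hab.2)
    apply ((isPWO_univ_nat.prod isPWO_univ_nat).image_of_monotone hmono).mono
    intro q hq
    simp only [Function.mem_support] at hq
    have h : ∃ nj : ℕ × ℕ, nj.1 ≤ nj.2 ∧ q = (nj.1 : ℚ) + expo p nj.2 := by
      by_contra h
      rw [dif_neg h] at hq
      exact hq rfl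
    obtain ⟨nj, _, rfl⟩ := h
    exact ⟨nj, by simp [Set.mem_prod], rfl⟩

/-- The additive map `ℤ →+ ℚ`, `k ↦ k/N`. -/
def embQ (N : ℕ) : ℤ →+ ℚ where
  toFun k := (k : ℚ) / (N : ℚ)
  map_zero' := by simp
  map_add' := by intros; push_cast; ring

lemma embQ_inj {N : ℕ} (hN : 0 < N) : Function.Injective (embQ N) := by
  intro a b hab
  have hN' : (0 : ℚ) < N := by exact_mod_cast hN
  simpa [embQ, div_eq_div_iff hN'.ne' hN'.ne', hN'.ne'] using hab

lemma embQ_mono {N : ℕ} (hN : 0 < N) : ∀ g g' : ℤ, embQ N g ≤ embQ N g' ↔ g ≤ g' := by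
  intro g g'
  have hN' : (0 : ℚ) < N := by exact_mod_cast hN
  simp [embQ, div_le_div_iff_of_pos_right hN', Int.cast_le]

lemma embQ_strictMono {N : ℕ} (hN : 0 < N) : StrictMono (embQ N) := by
  have := embQ_mono hN
  exact strictMono_of_le_iff_le fun a b => (this a b).symm

/-- Laurent series (Hahn series over `ℤ`) mapped into `H p` via `k ↦ k/N`. -/
noncomputable def laurentInc (N : ℕ) (hN : 0 < N) : HahnSeries ℤ (Fbar p) →+* H p :=
  HahnSeries.embDomainRingHom (embQ N) (embQ_inj hN) (embQ_mono hN)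

lemma mem_range_laurentInc_iff {N : ℕ} (hN : 0 < N) (f : H p) :
    (∃ g, laurentInc p N hN g = f) ↔ ∀ q ∈ f.support, ∃ k : ℤ, q = (k : ℚ) / N := by
  constructor
  · rintro ⟨g, rfl⟩ q hq
    obtain ⟨k, -, rfl⟩ := HahnSeries.support_embDomain_subset hq
    exact ⟨k, rfl⟩
  · intro hf
    classical
    have hpwo : (Function.support fun k : ℤ => f.coeff (embQ N k)).IsPWO := by
      apply Set.IsWF.isPWO
      rw [Set.isWF_iff_no_descending_seq]
      intro φ hφ hmem
      apply Set.isWF_iff_no_descending_seq.mp f.isWF_support (fun n => embQ N (φ n))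
        ((embQ_strictMono hN).comp_strictAnti hφ)
      intro n
      exact hmem n
    refine ⟨⟨fun k => f.coeff (embQ N k), hpwo⟩, ?_⟩
    apply HahnSeries.ext
    funext q
    by_cases hq : q ∈ Set.range (embQ N)
    · obtain ⟨k, rfl⟩ := hq
      exact HahnSeries.embDomain_mk_coeff (embQ_inj hN) (embQ_mono hN)
    · rw [show (laurentInc p N hN ⟨fun k => f.coeff (embQ N k), hpwo⟩).coeff q = 0 from
        HahnSeries.embDomain_notin_range hq]
      by_contra hne
      obtain ⟨k, hk⟩ := hf q (by simpa [HahnSeries.mem_support] using Ne.symm hne)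
      exact hq ⟨k, hk.symm⟩

/-- The Newton–Puiseux field `K`: Hahn series whose support lies in `(1/N)·ℤ` for some `N > 0`. -/
noncomputable def KNP : Subfield (H p) where
  carrier := {f : H p | ∃ N : ℕ, 0 < N ∧ ∀ q ∈ f.support, ∃ k : ℤ, q = (k : ℚ) / N}
  zero_mem' := ⟨1, one_pos, by simp⟩
  one_mem' := by
    refine ⟨1, one_pos, fun q hq => ?_⟩
    rw [HahnSeries.support_one] at hq
    exact ⟨0, by simp [Set.mem_singleton_iff.mp hq]⟩
  add_mem' := by
    rintro x y ⟨N, hN, hx⟩ ⟨M, hM, hy⟩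
    refine ⟨N * M, Nat.mul_pos hN hM, fun q hq => ?_⟩
    rcases HahnSeries.support_add_subset x y hq with h | h
    · obtain ⟨k, rfl⟩ := hx q h
      refine ⟨k * M, ?_⟩
      have hM' : (M : ℚ) ≠ 0 := by exact_mod_cast hM.ne'
      have hN' : (N : ℚ) ≠ 0 := by exact_mod_cast hN.ne'
      push_cast
      field_simp
    · obtain ⟨k, rfl⟩ := hy q h
      refine ⟨k * N, ?_⟩
      have hM' : (M : ℚ) ≠ 0 := by exact_mod_cast hM.ne'
      have hN' : (N : ℚ) ≠ 0 := by exact_mod_cast hN.ne'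
      push_cast
      field_simp
  neg_mem' := by
    rintro x ⟨N, hN, hx⟩
    exact ⟨N, hN, fun q hq => hx q (by rwa [HahnSeries.support_neg] at hq)⟩
  mul_mem' := by
    rintro x y ⟨N, hN, hx⟩ ⟨M, hM, hy⟩
    refine ⟨N * M, Nat.mul_pos hN hM, fun q hq => ?_⟩
    obtain ⟨q₁, hq₁, q₂, hq₂, rfl⟩ := HahnSeries.support_mul_subset hq
    obtain ⟨k₁, rfl⟩ := hx q₁ hq₁
    obtain ⟨k₂, rfl⟩ := hy q₂ hq₂
    refine ⟨k₁ * M + k₂ * N, ?_⟩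
    have hM' : (M : ℚ) ≠ 0 := by exact_mod_cast hM.ne'
    have hN' : (N : ℚ) ≠ 0 := by exact_mod_cast hN.ne'
    push_cast
    field_simp
  inv_mem' := by
    rintro x ⟨N, hN, hx⟩
    obtain ⟨g, rfl⟩ := (mem_range_laurentInc_iff p hN x).mpr hx
    rw [← map_inv₀]
    exact ⟨N, hN, ((mem_range_laurentInc_iff p hN _).mp ⟨g⁻¹, rfl⟩)⟩

/-- The truncation `s_{n,i} = ∑_{m<n} tᵐ·s_m + tⁿ·∑_{n ≤ j < i} C(j,n)·t^(-1/p^(j+1))`. -/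
noncomputable def strunc (n i : ℕ) : H p :=
  (∑ m ∈ Finset.range n, HahnSeries.single (m : ℚ) 1 * sn p m)
  + HahnSeries.single (n : ℚ) 1 *
      (∑ j ∈ Finset.Ico n i, HahnSeries.single (expo p j) ((Nat.choose j n : Fbar p)))

/-- `δ(n,i) = n - 1/p^(i+1)`. -/
def dlt (n i : ℕ) : ℚ := (n : ℚ) - ((p : ℚ) ^ (i + 1))⁻¹

/-- The depth-zero valuation `ω_{a,δ}(f) = min_ℓ (v(a_ℓ) + ℓ·δ)`, where
`f = ∑_ℓ a_ℓ·(x-a)^ℓ` is the Taylor expansion of `f` at `a`. -/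
noncomputable def om (a : H p) (δ : ℚ) (f : Polynomial (H p)) : WithTop ℚ :=
  (Finset.range (f.natDegree + 1)).inf
    fun ℓ => v p ((Polynomial.taylor a f).coeff ℓ) + (((ℓ : ℚ) * δ : ℚ) : WithTop ℚ)

-- The degree `[K(b) : K]` of an element `b ∈ H` over the Newton–Puiseux field `K`.
set_option synthInstance.maxHeartbeats 1000000 in
noncomputable def degK (b : H p) : ℕ :=
  Module.finrank (KNP p) (IntermediateField.adjoin (KNP p) {b})

lemma tinv_mem : HahnSeries.single (-1 : ℚ) (1 : Fbar p) ∈ KNP p := by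
  refine ⟨1, one_pos, fun q hq => ?_⟩
  have := HahnSeries.support_single_subset hq
  exact ⟨-1, by simp [Set.mem_singleton_iff.mp this]⟩

/-- `t^(-1) = single (-1) 1` as an element of `K`. -/
noncomputable def tinv : KNP p := ⟨HahnSeries.single (-1 : ℚ) (1 : Fbar p), tinv_mem p⟩



set_option linter.unusedSectionVars false

lemma v_def (x : H p) : v p x = x.orderTop := rfl

lemma p_pos : (0:ℚ) < p := lt_trans one_pos (one_lt_p p)

lemma expo_strictMono : StrictMono (expo p) := by
  intro j k hjk
  have hp : (1:ℚ) < p := one_lt_p p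
  have h1 : (0:ℚ) < (p:ℚ)^(j+1) := pow_pos (p_pos p) _
  have h2 : (p:ℚ)^(j+1) < (p:ℚ)^(k+1) := pow_lt_pow_right₀ hp (by omega)
  have h3 := inv_strictAnti₀ h1 h2
  simp only [expo, neg_lt_neg_iff]
  exact h3

lemma expo_injective : Function.Injective (expo p) := (expo_strictMono p).injective

lemma expo_neg (j : ℕ) : expo p j < 0 := by
  have h1 : (0:ℚ) < (p:ℚ)^(j+1) := pow_pos (p_pos p) _
  have h2 : (0:ℚ) < ((p:ℚ)^(j+1))⁻¹ := inv_pos.mpr h1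
  simp only [expo]
  linarith

lemma neg_one_lt_expo (j : ℕ) : -1 < expo p j := by
  have hp : (1:ℚ) < p := one_lt_p p
  have h1 : (1:ℚ) < (p:ℚ)^(j+1) := one_lt_pow₀ hp (by omega)
  have h2 : ((p:ℚ)^(j+1))⁻¹ < 1 := inv_lt_one_of_one_lt₀ h1
  simp only [expo]
  linarith

lemma pair_lt {n j m k : ℕ} (h : n < m) : (n:ℚ) + expo p j < (m:ℚ) + expo p k := by
  have h1 : (n:ℚ) + 1 ≤ m := by exact_mod_cast h
  have h2 := neg_one_lt_expo p k
  have h3 := expo_neg p j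
  linarith

lemma pair_inj {n j m k : ℕ} (h : (n:ℚ) + expo p j = (m:ℚ) + expo p k) :
    n = m ∧ j = k := by
  have hnm : n = m := by
    rcases lt_trichotomy n m with hlt | he | hgt
    · exact absurd h (ne_of_lt (pair_lt p hlt))
    · exact he
    · exact absurd h.symm (ne_of_lt (pair_lt p hgt))
  subst hnm
  refine ⟨rfl, expo_injective p ?_⟩
  linarith

lemma dlt_eq (n i : ℕ) : dlt p n i = (n:ℚ) + expo p i := by
  rw [dlt, expo]; ring

lemma dlt_lt_dlt {n i m j : ℕ} (hlex : n < m ∨ (n = m ∧ i < j)) :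
    dlt p n i < dlt p m j := by
  rw [dlt_eq, dlt_eq]
  rcases hlex with h | ⟨rfl, h⟩
  · exact pair_lt p h
  · have := expo_strictMono p h
    linarith

open Classical in
lemma sn_coeff_def (n : ℕ) (q : ℚ) :
    (sn p n).coeff q = if h : ∃ j : ℕ, n ≤ j ∧ q = expo p j then
      (Nat.choose h.choose n : Fbar p) else 0 := rfl

lemma sn_coeff {n j : ℕ} (h : n ≤ j) : (sn p n).coeff (expo p j) = (j.choose n : Fbar p) := by
  have hex : ∃ j' : ℕ, n ≤ j' ∧ expo p j = expo p j' := ⟨j, h, rfl⟩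
  rw [sn_coeff_def, dif_pos hex]
  have := expo_injective p hex.choose_spec.2.symm
  rw [this]

lemma sn_coeff_eq_zero {n : ℕ} {q : ℚ} (h : ¬ ∃ j, n ≤ j ∧ q = expo p j) :
    (sn p n).coeff q = 0 := by
  rw [sn_coeff_def, dif_neg h]

open Classical in
lemma sH_coeff_def (q : ℚ) :
    (sH p).coeff q = if h : ∃ nj : ℕ × ℕ, nj.1 ≤ nj.2 ∧ q = (nj.1 : ℚ) + expo p nj.2 then
      (Nat.choose h.choose.2 h.choose.1 : Fbar p) else 0 := rfl

lemma sH_coeff {n j : ℕ} (h : n ≤ j) :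
    (sH p).coeff ((n:ℚ) + expo p j) = (j.choose n : Fbar p) := by
  have hex : ∃ nj : ℕ × ℕ, nj.1 ≤ nj.2 ∧ (n:ℚ) + expo p j = (nj.1 : ℚ) + expo p nj.2 :=
    ⟨(n, j), h, rfl⟩
  rw [sH_coeff_def, dif_pos hex]
  obtain ⟨e1, e2⟩ := pair_inj p hex.choose_spec.2
  rw [← e1, ← e2]

lemma sH_coeff_eq_zero {q : ℚ}
    (h : ¬ ∃ nj : ℕ × ℕ, nj.1 ≤ nj.2 ∧ q = (nj.1 : ℚ) + expo p nj.2) :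
    (sH p).coeff q = 0 := by
  rw [sH_coeff_def, dif_neg h]

lemma single_one_mul_coeff (a q : ℚ) (x : H p) :
    (HahnSeries.single a (1 : Fbar p) * x).coeff q = x.coeff (q - a) := by
  have := HahnSeries.coeff_single_mul_add (r := (1:Fbar p)) (x := x) (a := q - a) (b := a)
  rw [sub_add_cancel] at this
  rw [this, one_mul]

lemma strunc_coeff (n i : ℕ) (q : ℚ) :
    (strunc p n i).coeff q =
      (∑ m ∈ Finset.range n, (sn p m).coeff (q - m)) +
      (∑ j ∈ Finset.Ico n i, if q = (n:ℚ) + expo p j then (j.choose n : Fbar p) else 0) := by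
  rw [strunc, HahnSeries.coeff_add]
  congr 1
  · calc (∑ m ∈ Finset.range n, HahnSeries.single (m:ℚ) 1 * sn p m).coeff q
        = ∑ m ∈ Finset.range n, (HahnSeries.single (m:ℚ) 1 * sn p m).coeff q :=
          map_sum (HahnSeries.coeff.addMonoidHom q) _ _
      _ = _ := Finset.sum_congr rfl fun m _ => single_one_mul_coeff p _ _ _
  · rw [Finset.mul_sum]
    calc (∑ j ∈ Finset.Ico n i, HahnSeries.single (n:ℚ) 1 *
            HahnSeries.single (expo p j) ((j.choose n : Fbar p))).coeff q
        = ∑ j ∈ Finset.Ico n i, (HahnSeries.single (n:ℚ) 1 *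
            HahnSeries.single (expo p j) ((j.choose n : Fbar p))).coeff q :=
          map_sum (HahnSeries.coeff.addMonoidHom q) _ _
      _ = _ := by
          refine Finset.sum_congr rfl fun j _ => ?_
          rw [HahnSeries.single_mul_single, one_mul, HahnSeries.coeff_single]
          split_ifs <;> rfl

lemma sn_coeff_shift_eq_zero {m n' j' : ℕ} (hne : m ≠ n') :
    (sn p m).coeff ((n':ℚ) + expo p j' - m) = 0 := by
  apply sn_coeff_eq_zero
  rintro ⟨j'', hj1, hj2⟩
  have h1 := neg_one_lt_expo p j'
  have h2 := expo_neg p j'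
  have h3 := neg_one_lt_expo p j''
  have h4 := expo_neg p j''
  rcases lt_or_gt_of_ne hne with hlt | hgt
  · have : (m:ℚ) + 1 ≤ n' := by exact_mod_cast hlt
    linarith
  · have : (n':ℚ) + 1 ≤ m := by exact_mod_cast hgt
    linarith

lemma diff_coeff_lt (n i : ℕ) (q : ℚ) (hq : q < dlt p n i) :
    (sH p - strunc p n i).coeff q = 0 := by
  rw [HahnSeries.coeff_sub, sub_eq_zero]
  by_cases hex : ∃ nj : ℕ × ℕ, nj.1 ≤ nj.2 ∧ q = (nj.1:ℚ) + expo p nj.2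
  · obtain ⟨⟨n', j'⟩, hle, rfl⟩ := hex
    rw [sH_coeff p hle, strunc_coeff]
    rw [dlt_eq] at hq
    have hcase : n' < n ∨ (n' = n ∧ j' < i) := by
      rcases lt_trichotomy n' n with h | h | h
      · exact Or.inl h
      · refine Or.inr ⟨h, ?_⟩
        subst h
        have hlt : expo p j' < expo p i := by linarith
        exact (expo_strictMono p).lt_iff_lt.mp hlt
      · exact absurd (pair_lt p (j := i) (k := j') h) (by push_neg; linarith)
    rcases hcase with hlt | ⟨rfl, hji⟩
    · rw [Finset.sum_eq_single_of_mem n' (Finset.mem_range.mpr hlt)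
        (fun b _ hb => sn_coeff_shift_eq_zero p hb)]
      rw [Finset.sum_eq_zero (fun j _ => if_neg (fun heq => by
        obtain ⟨e1, e2⟩ := pair_inj p heq; omega))]
      rw [add_sub_cancel_left, sn_coeff p hle, add_zero]
    · rw [Finset.sum_eq_zero (fun m hm =>
        sn_coeff_shift_eq_zero p (Nat.ne_of_lt (Finset.mem_range.mp hm)))]
      rw [Finset.sum_eq_single_of_mem j' (Finset.mem_Ico.mpr ⟨hle, hji⟩)
        (fun b _ hb => if_neg (fun heq => hb ((pair_inj p heq).2.symm)))]
      rw [if_pos rfl, zero_add]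
  · rw [sH_coeff_eq_zero p hex, strunc_coeff]
    rw [Finset.sum_eq_zero, Finset.sum_eq_zero, add_zero]
    · intro j hj
      refine if_neg (fun heq => hex ⟨(n, j), (Finset.mem_Ico.mp hj).1, heq⟩)
    · intro m _
      apply sn_coeff_eq_zero
      rintro ⟨j'', hj1, hj2⟩
      exact hex ⟨(m, j''), hj1, by linarith⟩

lemma diff_coeff_at (n i : ℕ) (h1 : n ≤ i) :
    (sH p - strunc p n i).coeff (dlt p n i) = (i.choose n : Fbar p) := by
  rw [dlt_eq, HahnSeries.coeff_sub, sH_coeff p h1, strunc_coeff]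
  rw [Finset.sum_eq_zero (fun m hm =>
    sn_coeff_shift_eq_zero p (Nat.ne_of_lt (Finset.mem_range.mp hm)))]
  rw [Finset.sum_eq_zero (fun j hj => if_neg (fun heq => by
    have hj2 := (Finset.mem_Ico.mp hj).2
    obtain ⟨e1, e2⟩ := pair_inj p heq; omega))]
  simp

lemma choose_cast_ne_zero {a b : ℕ} (h : ¬ p ∣ a.choose b) :
    ((a.choose b : ℕ) : Fbar p) ≠ 0 := by
  haveI : NeZero p := ⟨(Fact.out : p.Prime).ne_zero⟩
  have he : ((a.choose b : ℕ) : Fbar p)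
      = algebraMap (ZMod p) (Fbar p) ((a.choose b : ℕ) : ZMod p) := by
    rw [map_natCast]
  rw [he]
  intro h0
  have h1 : ((a.choose b : ℕ) : ZMod p) = 0 :=
    (algebraMap (ZMod p) (Fbar p)).injective (by rw [h0, map_zero])
  rw [ZMod.natCast_eq_zero_iff] at h1
  exact h h1

lemma v_diff (n i : ℕ) (h1 : n ≤ i) (h2 : ¬ p ∣ i.choose n) :
    v p (sH p - strunc p n i) = ((dlt p n i : ℚ) : WithTop ℚ) := by
  rw [v_def]
  apply HahnSeries.orderTop_eq_of_le
  · rw [HahnSeries.mem_support, diff_coeff_at p n i h1]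
    exact choose_cast_ne_zero p h2
  · intro g' hg'
    by_contra hlt
    push_neg at hlt
    rw [HahnSeries.mem_support] at hg'
    exact hg' (diff_coeff_lt p n i g' hlt)

lemma le_v_mul (x y : H p) : v p x + v p y ≤ v p (x * y) :=
  (HahnSeries.orderTop_mul x y).symm.le

lemma v_natCast_nonneg (N : ℕ) : (0 : WithTop ℚ) ≤ v p (N : H p) := by
  rw [v_def, show ((N : ℕ) : H p) = HahnSeries.C ((N : ℕ) : Fbar p) from (map_natCast HahnSeries.C N).symm]
  rw [HahnSeries.C_apply]
  exact_mod_cast HahnSeries.orderTop_single_le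

lemma v_one : v p (1 : H p) = 0 := by
  rw [v_def]; exact HahnSeries.orderTop_one

lemma le_v_pow (x : H p) (k : ℕ) (δ : ℚ) (h : (δ : WithTop ℚ) ≤ v p x) :
    (((k : ℚ) * δ : ℚ) : WithTop ℚ) ≤ v p (x ^ k) := by
  induction k with
  | zero => simp [pow_zero, v_one]
  | succ k ih =>
    have : (((k + 1 : ℕ) : ℚ) * δ : ℚ) = ((k : ℚ) * δ) + δ := by push_cast; ring
    rw [this, pow_succ, WithTop.coe_add]
    exact le_trans (add_le_add ih h) (le_v_mul p _ _)

lemma le_v_sum_add {ι : Type*} (s : Finset ι) (u : ι → H p) (c d : WithTop ℚ)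
    (h : ∀ k ∈ s, c ≤ v p (u k) + d) : c ≤ v p (∑ k ∈ s, u k) + d := by
  classical
  induction s using Finset.induction_on with
  | empty =>
    rw [Finset.sum_empty]
    rw [show v p (0 : H p) = ⊤ from HahnSeries.orderTop_zero]
    exact le_trans le_top (le_of_eq (top_add d).symm)
  | @insert a s' hx ih =>
    rw [Finset.sum_insert hx]
    have hmin : min (v p (u a)) (v p (∑ k ∈ s', u k)) ≤ v p (u a + ∑ k ∈ s', u k) := by
      rw [v_def, v_def, v_def]
      exact HahnSeries.min_orderTop_le_orderTop_add
    calc c ≤ min (v p (u a) + d) (v p (∑ k ∈ s', u k) + d) :=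
          le_min (h a (Finset.mem_insert_self a s'))
            (ih fun k hk => h k (Finset.mem_insert_of_mem hk))
      _ = min (v p (u a)) (v p (∑ k ∈ s', u k)) + d := min_add_add_right _ _ _
      _ ≤ _ := add_le_add_left hmin d

lemma le_v_sum {ι : Type*} (s : Finset ι) (u : ι → H p) (c : WithTop ℚ)
    (h : ∀ k ∈ s, c ≤ v p (u k)) : c ≤ v p (∑ k ∈ s, u k) := by
  simpa using le_v_sum_add p s u c 0 (by simpa using h)

lemma om_le_coeff (a : H p) (δ : ℚ) (f : Polynomial (H p)) {ℓ : ℕ} (hℓ : ℓ ≤ f.natDegree) :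
    om p a δ f ≤ v p ((Polynomial.taylor a f).coeff ℓ) + (((ℓ : ℚ) * δ : ℚ) : WithTop ℚ) :=
  Finset.inf_le (Finset.mem_range.mpr (by omega))

lemma om_mono (a : H p) {δ δ' : ℚ} (h : δ ≤ δ') (f : Polynomial (H p)) :
    om p a δ f ≤ om p a δ' f := by
  apply Finset.le_inf
  intro ℓ hℓ
  refine le_trans (Finset.inf_le hℓ) (add_le_add_right ?_ _)
  exact_mod_cast mul_le_mul_of_nonneg_left h (Nat.cast_nonneg ℓ)

lemma om_shift (a b : H p) (δ : ℚ) (h : (δ : WithTop ℚ) ≤ v p (b - a))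
    (f : Polynomial (H p)) : om p b δ f ≤ om p a δ f := by
  apply Finset.le_inf
  intro ℓ hℓ
  have hcoeff : (Polynomial.taylor a f).coeff ℓ
      = (Polynomial.hasseDeriv ℓ (Polynomial.taylor b f)).eval (a - b) := by
    rw [show Polynomial.taylor a f = Polynomial.taylor (a - b) (Polynomial.taylor b f) by
      rw [taylor_taylor]; congr 1; ring]
    rw [Polynomial.taylor_coeff]
  set g := Polynomial.taylor b f with hg
  have hdeg : (Polynomial.hasseDeriv ℓ g).natDegree < f.natDegree + 1 := by
    have h1 := Polynomial.natDegree_hasseDeriv_le g ℓ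
    have h2 : g.natDegree = f.natDegree := Polynomial.natDegree_taylor f b
    omega
  rw [hcoeff, Polynomial.eval_eq_sum_range' hdeg]
  apply le_v_sum_add
  intro k _
  rw [Polynomial.hasseDeriv_coeff]
  by_cases hkl : k + ℓ ≤ f.natDegree
  · have h0 : om p b δ f ≤ v p (g.coeff (k + ℓ)) + ((((k + ℓ : ℕ) : ℚ) * δ : ℚ) : WithTop ℚ) :=
      om_le_coeff p b δ f hkl
    refine le_trans h0 ?_
    have hvab : (δ : WithTop ℚ) ≤ v p (a - b) := by
      rw [show a - b = -(b - a) by ring, v_def, HahnSeries.orderTop_neg, ← v_def]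
      exact h
    have hv1 : (0 : WithTop ℚ) ≤ v p (((k + ℓ).choose ℓ : H p)) := v_natCast_nonneg p _
    have hv2 : (((k : ℚ) * δ : ℚ) : WithTop ℚ) ≤ v p ((a - b) ^ k) := le_v_pow p _ k δ hvab
    have harith : ((((k + ℓ : ℕ) : ℚ) * δ : ℚ) : WithTop ℚ)
        = (((k : ℚ) * δ : ℚ) : WithTop ℚ) + (((ℓ : ℚ) * δ : ℚ) : WithTop ℚ) := by
      rw [← WithTop.coe_add]
      congr 1
      push_cast
      ring
    calc v p (g.coeff (k + ℓ)) + ((((k + ℓ : ℕ) : ℚ) * δ : ℚ) : WithTop ℚ)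
        = (v p (g.coeff (k + ℓ)) + (((k : ℚ) * δ : ℚ) : WithTop ℚ))
          + (((ℓ : ℚ) * δ : ℚ) : WithTop ℚ) := by rw [harith, add_assoc]
      _ ≤ (v p (g.coeff (k + ℓ)) + v p ((a - b) ^ k)) + (((ℓ : ℚ) * δ : ℚ) : WithTop ℚ) :=
          add_le_add_left (add_le_add_right hv2 _) _
      _ ≤ ((0 : WithTop ℚ) + v p (g.coeff (k + ℓ)) + v p ((a - b) ^ k))
          + (((ℓ : ℚ) * δ : ℚ) : WithTop ℚ) := by rw [zero_add]
      _ ≤ ((v p (((k + ℓ).choose ℓ : H p)) + v p (g.coeff (k + ℓ))) + v p ((a - b) ^ k))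
          + (((ℓ : ℚ) * δ : ℚ) : WithTop ℚ) := by
            exact add_le_add_left (add_le_add_left (add_le_add_left hv1 _) _) _
      _ ≤ (v p (((k + ℓ).choose ℓ : H p) * g.coeff (k + ℓ)) + v p ((a - b) ^ k))
          + (((ℓ : ℚ) * δ : ℚ) : WithTop ℚ) :=
            add_le_add_left (add_le_add_left (le_v_mul p _ _) _) _
      _ ≤ v p (((k + ℓ).choose ℓ : H p) * g.coeff (k + ℓ) * (a - b) ^ k)
          + (((ℓ : ℚ) * δ : ℚ) : WithTop ℚ) := add_le_add_left (le_v_mul p _ _) _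
  · have hz : g.coeff (k + ℓ) = 0 := by
      apply Polynomial.coeff_eq_zero_of_natDegree_lt
      rw [Polynomial.natDegree_taylor]
      omega
    rw [hz, mul_zero, zero_mul]
    rw [show v p (0 : H p) = ⊤ from HahnSeries.orderTop_zero, top_add]
    exact le_top

lemma om_le_eval (b : H p) (δ : ℚ) (hs : (δ : WithTop ℚ) ≤ v p (sH p - b))
    (f : Polynomial (H p)) : om p b δ f ≤ v p (Polynomial.eval (sH p) f) := by
  rw [show Polynomial.eval (sH p) f = (Polynomial.taylor b f).eval (sH p - b) from
    (Polynomial.taylor_eval_sub b f _).symm]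
  have hdeg : (Polynomial.taylor b f).natDegree < f.natDegree + 1 := by
    rw [Polynomial.natDegree_taylor]; omega
  rw [Polynomial.eval_eq_sum_range' hdeg]
  apply le_v_sum
  intro k _
  by_cases hk : k ≤ f.natDegree
  · have h0 := om_le_coeff p b δ f hk
    refine le_trans h0 ?_
    have hv2 : (((k : ℚ) * δ : ℚ) : WithTop ℚ) ≤ v p ((sH p - b) ^ k) := le_v_pow p _ k δ hs
    exact le_trans (add_le_add_right hv2 _) (le_v_mul p _ _)
  · have hz : (Polynomial.taylor b f).coeff k = 0 := by
      apply Polynomial.coeff_eq_zero_of_natDegree_lt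
      rw [Polynomial.natDegree_taylor]
      omega
    rw [hz, zero_mul]
    rw [show v p (0 : H p) = ⊤ from HahnSeries.orderTop_zero]
    exact le_top

lemma om_linear (a b : H p) (δ : ℚ) (hv : v p (a - b) = (δ : WithTop ℚ)) :
    om p a δ (X - Polynomial.C b) = (δ : WithTop ℚ) := by
  have hdeg : (X - Polynomial.C b).natDegree = 1 := Polynomial.natDegree_X_sub_C b
  have ht : Polynomial.taylor a (X - Polynomial.C b) = X + Polynomial.C (a - b) := by
    rw [Polynomial.taylor_apply, Polynomial.sub_comp, Polynomial.X_comp, Polynomial.C_comp,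
      Polynomial.C_sub]
    ring
  have h0 : (Polynomial.taylor a (X - Polynomial.C b)).coeff 0 = a - b := by
    rw [ht]; simp
  have h1 : (Polynomial.taylor a (X - Polynomial.C b)).coeff 1 = 1 := by
    rw [ht]; simp
  rw [om, hdeg]
  rw [show Finset.range (1 + 1) = {0, 1} from rfl]
  rw [Finset.inf_insert, Finset.inf_singleton]
  rw [h0, h1, hv, v_one]
  push_cast
  simp

/-- for `(n,i) < (m,j)` in `S` and every `f ∈ H[x]`,
`ω_{s_{n,i},δ(n,i)}(f) ≤ ω_{s_{m,j},δ(m,j)}(f) ≤ v(f(s))`; moreover the first inequality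
is strict for `f = x - s_{m,j}`: `ω_{s_{n,i},δ(n,i)}(x - s_{m,j}) = δ(n,i) < δ(m,j)
= v(s - s_{m,j})`; in particular the family is strictly increasing along `S` and bounded
above by `f ↦ v(f(s))`. -/
theorem omega_family_increasing (n i m j : ℕ) (h1 : n ≤ i) (h2 : ¬ p ∣ Nat.choose i n)
    (h3 : m ≤ j) (h4 : ¬ p ∣ Nat.choose j m) (hlex : n < m ∨ (n = m ∧ i < j)) :
    (∀ f : Polynomial (H p),
      om p (strunc p n i) (dlt p n i) f ≤ om p (strunc p m j) (dlt p m j) f ∧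
      om p (strunc p m j) (dlt p m j) f ≤ v p (Polynomial.eval (sH p) f))
    ∧ om p (strunc p n i) (dlt p n i) (X - Polynomial.C (strunc p m j)) = ((dlt p n i : ℚ) : WithTop ℚ)
    ∧ dlt p n i < dlt p m j
    ∧ ((dlt p m j : ℚ) : WithTop ℚ) = v p (sH p - strunc p m j) := by
  have hvn : v p (sH p - strunc p n i) = ((dlt p n i : ℚ) : WithTop ℚ) := v_diff p n i h1 h2
  have hvm : v p (sH p - strunc p m j) = ((dlt p m j : ℚ) : WithTop ℚ) := v_diff p m j h3 h4
  have hdlt : dlt p n i < dlt p m j := dlt_lt_dlt p hlex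
  have hsub : v p (strunc p m j - strunc p n i) = ((dlt p n i : ℚ) : WithTop ℚ) := by
    have e : strunc p m j - strunc p n i
        = (sH p - strunc p n i) - (sH p - strunc p m j) := by ring
    rw [e, v_def, HahnSeries.orderTop_sub, ← v_def, hvn]
    rw [← v_def, hvn, ← v_def, hvm]
    exact_mod_cast hdlt
  have hsub' : v p (strunc p n i - strunc p m j) = ((dlt p n i : ℚ) : WithTop ℚ) := by
    rw [show strunc p n i - strunc p m j = -(strunc p m j - strunc p n i) by ring]
    rw [v_def, HahnSeries.orderTop_neg, ← v_def, hsub]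
  refine ⟨fun f => ⟨?_, ?_⟩, ?_, hdlt, hvm.symm⟩
  · calc om p (strunc p n i) (dlt p n i) f ≤ om p (strunc p m j) (dlt p n i) f :=
        om_shift p _ _ _ (le_of_eq hsub'.symm) f
      _ ≤ om p (strunc p m j) (dlt p m j) f := om_mono p _ hdlt.le f
  · exact om_le_eval p _ _ (le_of_eq hvm.symm) f
  · exact om_linear p _ _ _ hsub'
end

section
/- Let L ⊆ H be the relative algebraic closure of K in H, i.e., the subfield of all elements of H that are algebraic over K. For every a ∈ L, every δ ∈ Q, and every nonzero g ∈ K[x]: there exists h ∈ K[x] with ω_{a,δ}(g·h − 1) > 0 if and only if there exists h' ∈ L[x] with ω_{a,δ}(g·h' − 1) > 0. (Equivalently, the initial term of g is a unit in the graded algebra of the restriction of ω_{a,δ} to K[x] if and only if it is a unit in the graded algebra of the restriction of ω_{a,δ} to L[x].) -/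
/-!
Common setup: `p` a prime, `F` an algebraic closure of `𝔽_p`, `H = F((t^ℚ))` the Hahn series
field with its canonical additive valuation `v` (minimum of the support), the Newton–Puiseux
subfield `K ⊆ H`, the elements `s_n`, the series `s = ∑ tⁿ·s_n`, the truncations `s_{n,i}`,
the rationals `δ(n,i) = n - 1/p^(i+1)`, and the depth-zero valuations `ω_{a,δ}`.
-/

open Polynomial HahnSeries

variable (p : ℕ) [Fact p.Prime]

variable {p}

lemma v_eq_order {x : H p} (hx : x ≠ 0) : v p x = (x.order : WithTop ℚ) := by
  rw [v, HahnSeries.order_eq_orderTop_of_ne_zero hx]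

lemma v_mul (x y : H p) : v p (x * y) = v p x + v p y := by
  by_cases hx : x = 0
  · simp [v, hx]
  by_cases hy : y = 0
  · simp [v, hy]
  have hxy : x * y ≠ 0 := mul_ne_zero hx hy
  rw [v_eq_order hx, v_eq_order hy, v_eq_order hxy, HahnSeries.order_mul hx hy,
    WithTop.coe_add]

lemma v_eq_top_iff {x : H p} : v p x = ⊤ ↔ x = 0 := HahnSeries.orderTop_eq_top

lemma v_sub_one_pos {x : H p} (h0 : v p x = 0) (h1 : x.coeff 0 = 1) : 0 < v p (x - 1) := by
  by_cases h : x - 1 = 0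
  · simp [v, h]
  have hx : x ≠ 0 := by rintro rfl; simp [v] at h0
  rw [v, HahnSeries.zero_lt_orderTop_iff h]
  by_contra hle
  push_neg at hle
  have hne : (x - 1).coeff ((x - 1).order) ≠ 0 := by
    rw [← HahnSeries.leadingCoeff_eq]
    exact HahnSeries.leadingCoeff_ne_zero.mpr h
  rcases lt_or_eq_of_le hle with hlt | heq
  · have hxc : x.coeff ((x-1).order) = 0 := by
      apply HahnSeries.coeff_eq_zero_of_lt_orderTop
      rw [show x.orderTop = (0 : WithTop ℚ) from h0]
      exact_mod_cast hlt
    have h1c : (1 : H p).coeff ((x-1).order) = 0 := by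
      rw [HahnSeries.coeff_one, if_neg (ne_of_lt hlt)]
    rw [HahnSeries.coeff_sub, hxc, h1c, sub_zero] at hne
    exact hne rfl
  · rw [heq, HahnSeries.coeff_sub, h1, HahnSeries.coeff_one, if_pos rfl, sub_self] at hne
    exact hne rfl

lemma lt_v_sum {ι : Type*} {s : Finset ι} {f : ι → H p} {c : ℚ}
    (h : ∀ i ∈ s, (c : WithTop ℚ) < v p (f i)) :
    (c : WithTop ℚ) < v p (∑ i ∈ s, f i) := by
  classical
  induction s using Finset.induction_on with
  | empty => simp [v]
  | @insert a s ha ih =>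
    rw [Finset.sum_insert ha]
    refine lt_of_lt_of_le (lt_min (h _ (Finset.mem_insert_self a s))
      (ih fun i hi => h i (Finset.mem_insert_of_mem hi))) ?_
    exact HahnSeries.min_orderTop_le_orderTop_add

lemma om_pos_iff {a : H p} {δ : ℚ} {f : Polynomial (H p)} :
    0 < om p a δ f ↔
      ∀ ℓ : ℕ, 0 < v p ((Polynomial.taylor a f).coeff ℓ) + (((ℓ : ℚ) * δ : ℚ) : WithTop ℚ) := by
  rw [om, Finset.lt_inf_iff (lt_top_iff_ne_top.mpr (by simp))]
  constructor
  · intro h ℓ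
    by_cases hℓ : ℓ ∈ Finset.range (f.natDegree + 1)
    · exact h ℓ hℓ
    · have : (Polynomial.taylor a f).coeff ℓ = 0 := by
        apply Polynomial.coeff_eq_zero_of_natDegree_lt
        rw [Polynomial.natDegree_taylor]
        simpa using hℓ
      rw [this]
      simp [v, WithTop.top_add]
  · intro h ℓ _
    exact h ℓ

lemma om_mul_sub_one_pos_iff {a : H p} {δ : ℚ} (G Hq : Polynomial (H p)) :
    0 < om p a δ (G * Hq - 1) ↔
      (0 < v p (((Polynomial.taylor a G) * (Polynomial.taylor a Hq)).coeff 0 - 1) ∧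
       ∀ ℓ : ℕ, 1 ≤ ℓ →
         0 < v p (((Polynomial.taylor a G) * (Polynomial.taylor a Hq)).coeff ℓ)
           + (((ℓ : ℚ) * δ : ℚ) : WithTop ℚ)) := by
  have ht : Polynomial.taylor a (G * Hq - 1) =
      (Polynomial.taylor a G) * (Polynomial.taylor a Hq) - 1 := by
    simp only [Polynomial.taylor_apply, Polynomial.sub_comp, Polynomial.mul_comp,
      Polynomial.one_comp]
  rw [om_pos_iff]
  constructor
  · intro h
    constructor
    · have h0 := h 0
      rw [ht] at h0
      simpa using h0
    · intro ℓ hℓ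
      have hh := h ℓ
      rw [ht, Polynomial.coeff_sub, Polynomial.coeff_one, if_neg (by omega), sub_zero] at hh
      exact hh
  · rintro ⟨h0, h1⟩ ℓ
    rw [ht, Polynomial.coeff_sub, Polynomial.coeff_one]
    rcases Nat.eq_zero_or_pos ℓ with rfl | hℓ
    · simpa using h0
    · rw [if_neg (by omega), sub_zero]
      exact h1 ℓ hℓ

lemma crit_of_exists {δ : ℚ} {A B : Polynomial (H p)}
    (h0 : 0 < v p ((A * B).coeff 0 - 1))
    (h1 : ∀ ℓ : ℕ, 1 ≤ ℓ → 0 < v p ((A * B).coeff ℓ) + (((ℓ : ℚ) * δ : ℚ) : WithTop ℚ)) :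
    ∀ ℓ : ℕ, 1 ≤ ℓ → v p (A.coeff 0) < v p (A.coeff ℓ) + (((ℓ : ℚ) * δ : ℚ) : WithTop ℚ) := by
  classical
  have hAB0 : v p ((A * B).coeff 0) = 0 := by
    have hx : (A * B).coeff 0 = ((A * B).coeff 0 - 1) + 1 := by ring
    rw [hx, v, HahnSeries.orderTop_add_eq_right (by rw [HahnSeries.orderTop_one]; exact h0)]
    exact HahnSeries.orderTop_one
  have hABc : (A * B).coeff 0 = A.coeff 0 * B.coeff 0 := Polynomial.mul_coeff_zero A B
  have hvv : v p (A.coeff 0) + v p (B.coeff 0) = 0 := by rw [← v_mul, ← hABc, hAB0]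
  have hA0top : v p (A.coeff 0) ≠ ⊤ := by
    intro h; rw [h, WithTop.top_add] at hvv; exact WithTop.top_ne_zero hvv
  have hB0top : v p (B.coeff 0) ≠ ⊤ := by
    intro h; rw [h, WithTop.add_top] at hvv; exact WithTop.top_ne_zero hvv
  obtain ⟨a0, ha0⟩ := WithTop.ne_top_iff_exists.mp hA0top
  obtain ⟨b0, hb0⟩ := WithTop.ne_top_iff_exists.mp hB0top
  intro ℓ₀ hℓ₀
  by_contra hcon
  push_neg at hcon
  set fA : ℕ → WithTop ℚ := fun ℓ => v p (A.coeff ℓ) + (((ℓ : ℚ) * δ : ℚ) : WithTop ℚ) with hfA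
  set fB : ℕ → WithTop ℚ := fun ℓ => v p (B.coeff ℓ) + (((ℓ : ℚ) * δ : ℚ) : WithTop ℚ) with hfB
  have hfA0 : fA 0 = v p (A.coeff 0) := by simp [hfA]
  have hfB0 : fB 0 = v p (B.coeff 0) := by simp [hfB]
  have hcon' : fA ℓ₀ ≤ fA 0 := by
    rw [hfA0]; exact hcon
  set wA := (Finset.range (A.natDegree + 1)).inf fA with hwA
  set wB := (Finset.range (B.natDegree + 1)).inf fB with hwB
  have hwAle : ∀ ℓ, wA ≤ fA ℓ := by
    intro ℓ
    by_cases h : ℓ ≤ A.natDegree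
    · exact Finset.inf_le (Finset.mem_range.mpr (by omega))
    · have hz : A.coeff ℓ = 0 := Polynomial.coeff_eq_zero_of_natDegree_lt (by omega)
      simp [hfA, hz, v, WithTop.top_add]
  have hwBle : ∀ ℓ, wB ≤ fB ℓ := by
    intro ℓ
    by_cases h : ℓ ≤ B.natDegree
    · exact Finset.inf_le (Finset.mem_range.mpr (by omega))
    · have hz : B.coeff ℓ = 0 := Polynomial.coeff_eq_zero_of_natDegree_lt (by omega)
      simp [hfB, hz, v, WithTop.top_add]
  have hwAtop : wA ≠ ⊤ := by
    intro h
    have : fA 0 = ⊤ := top_le_iff.mp (h ▸ hwAle 0)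
    rw [hfA0] at this; exact hA0top this
  have hwBtop : wB ≠ ⊤ := by
    intro h
    have : fB 0 = ⊤ := top_le_iff.mp (h ▸ hwBle 0)
    rw [hfB0] at this; exact hB0top this
  -- argmax sets
  obtain ⟨iA, hiAmem, hiA⟩ :=
    Finset.exists_mem_eq_inf (Finset.range (A.natDegree + 1)) ⟨0, by simp⟩ fA
  obtain ⟨iB, hiBmem, hiB⟩ :=
    Finset.exists_mem_eq_inf (Finset.range (B.natDegree + 1)) ⟨0, by simp⟩ fB
  set SA := (Finset.range (A.natDegree + 1)).filter (fun ℓ => fA ℓ = wA) with hSA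
  set SB := (Finset.range (B.natDegree + 1)).filter (fun ℓ => fB ℓ = wB) with hSB
  have hSAne : SA.Nonempty := ⟨iA, Finset.mem_filter.mpr ⟨hiAmem, hiA.symm⟩⟩
  have hSBne : SB.Nonempty := ⟨iB, Finset.mem_filter.mpr ⟨hiBmem, hiB.symm⟩⟩
  set d := SA.max' hSAne with hd
  set e := SB.max' hSBne with he
  have hdS : fA d = wA := (Finset.mem_filter.mp (SA.max'_mem hSAne)).2
  have heS : fB e = wB := (Finset.mem_filter.mp (SB.max'_mem hSBne)).2
  have hdlt : ∀ i, d < i → wA < fA i := by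
    intro i hi
    by_cases h : i ≤ A.natDegree
    · have hnmem : i ∉ SA := fun hmem => absurd (SA.le_max' i hmem) (by omega)
      have hne : fA i ≠ wA := fun hee =>
        hnmem (Finset.mem_filter.mpr ⟨Finset.mem_range.mpr (by omega), hee⟩)
      exact lt_of_le_of_ne (hwAle i) (Ne.symm hne)
    · have hz : A.coeff i = 0 := Polynomial.coeff_eq_zero_of_natDegree_lt (by omega)
      have : fA i = ⊤ := by simp [hfA, hz, v, WithTop.top_add]
      rw [this]; exact lt_top_iff_ne_top.mpr hwAtop
  have helt : ∀ j, e < j → wB < fB j := by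
    intro j hj
    by_cases h : j ≤ B.natDegree
    · have hnmem : j ∉ SB := fun hmem => absurd (SB.le_max' j hmem) (by omega)
      have hne : fB j ≠ wB := fun hee =>
        hnmem (Finset.mem_filter.mpr ⟨Finset.mem_range.mpr (by omega), hee⟩)
      exact lt_of_le_of_ne (hwBle j) (Ne.symm hne)
    · have hz : B.coeff j = 0 := Polynomial.coeff_eq_zero_of_natDegree_lt (by omega)
      have : fB j = ⊤ := by simp [hfB, hz, v, WithTop.top_add]
      rw [this]; exact lt_top_iff_ne_top.mpr hwBtop
  have hd1 : 1 ≤ d := by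
    by_contra h
    have hd0 : d = 0 := by omega
    have h2 : wA < fA ℓ₀ := hdlt ℓ₀ (by omega)
    have h3 : fA 0 = wA := hd0 ▸ hdS
    exact lt_irrefl wA (lt_of_lt_of_le h2 (le_trans hcon' (le_of_eq h3)))
  -- rationals at d and e
  have hvAd : v p (A.coeff d) ≠ ⊤ := by
    intro h
    apply hwAtop
    rw [← hdS]
    show v p (A.coeff d) + _ = ⊤
    rw [h, WithTop.top_add]
  have hvBe : v p (B.coeff e) ≠ ⊤ := by
    intro h
    apply hwBtop
    rw [← heS]
    show v p (B.coeff e) + _ = ⊤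
    rw [h, WithTop.top_add]
  obtain ⟨α, hα⟩ := WithTop.ne_top_iff_exists.mp hvAd
  obtain ⟨β, hβ⟩ := WithTop.ne_top_iff_exists.mp hvBe
  have hwAeq : wA = ((α + (d : ℚ) * δ : ℚ) : WithTop ℚ) := by
    rw [← hdS]
    show v p (A.coeff d) + _ = _
    rw [← hα, ← WithTop.coe_add]
  have hwBeq : wB = ((β + (e : ℚ) * δ : ℚ) : WithTop ℚ) := by
    rw [← heS]
    show v p (B.coeff e) + _ = _
    rw [← hβ, ← WithTop.coe_add]
  set n := d + e with hn
  have hn1 : 1 ≤ n := by omega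
  have he2 : wA + wB = ((α + β : ℚ) : WithTop ℚ) + (((n : ℚ) * δ : ℚ) : WithTop ℚ) := by
    rw [hwAeq, hwBeq, ← WithTop.coe_add, ← WithTop.coe_add]
    refine congrArg _ ?_
    rw [hn]
    push_cast
    ring
  have hmem : (d, e) ∈ Finset.HasAntidiagonal.antidiagonal n := Finset.HasAntidiagonal.mem_antidiagonal.mpr rfl
  set rest := ∑ ij ∈ (Finset.HasAntidiagonal.antidiagonal n).erase (d, e), A.coeff ij.1 * B.coeff ij.2 with hrestdef
  have hsplit : (A * B).coeff n = A.coeff d * B.coeff e + rest := by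
    rw [Polynomial.coeff_mul, hrestdef]
    exact (Finset.add_sum_erase _ _ hmem).symm
  have hterm : v p (A.coeff d * B.coeff e) = ((α + β : ℚ) : WithTop ℚ) := by
    rw [v_mul, ← hα, ← hβ, WithTop.coe_add]
  have hrest : ((α + β : ℚ) : WithTop ℚ) < v p rest := by
    rw [hrestdef]
    apply lt_v_sum
    rintro ⟨i, j⟩ hij
    obtain ⟨hne, hmem'⟩ := Finset.mem_erase.mp hij
    have hijsum : i + j = n := Finset.HasAntidiagonal.mem_antidiagonal.mp hmem'
    have hkey : wA + wB < fA i + fB j := by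
      rcases lt_trichotomy i d with h | h | h
      · have hj : e < j := by omega
        calc wA + wB < wA + fB j := WithTop.add_lt_add_left hwAtop (helt j hj)
          _ ≤ fA i + fB j := add_le_add_left (hwAle i) _
      · exfalso; apply hne; subst h
        have : j = e := by omega
        rw [this]
      · calc wA + wB < fA i + wB := WithTop.add_lt_add_right hwBtop (hdlt i h)
          _ ≤ fA i + fB j := add_le_add_right (hwBle j) _
    have he1 : fA i + fB j = v p (A.coeff i * B.coeff j) + (((n : ℚ) * δ : ℚ) : WithTop ℚ) := by
      rw [v_mul]
      show (v p (A.coeff i) + _) + (v p (B.coeff j) + _) = _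
      rw [add_add_add_comm, ← WithTop.coe_add]
      congr 2
      rw [← hijsum]
      push_cast
      ring
    rw [he1, he2] at hkey
    exact (WithTop.add_lt_add_iff_right (WithTop.coe_ne_top)).mp hkey
  have hcoeff : v p ((A * B).coeff n) = ((α + β : ℚ) : WithTop ℚ) := by
    rw [hsplit, v,
      HahnSeries.orderTop_add_eq_left (lt_of_eq_of_lt hterm hrest)]
    exact hterm
  have hfinal := h1 n hn1
  rw [hcoeff] at hfinal
  have hle : wA + wB ≤ 0 := by
    calc wA + wB ≤ fA 0 + fB 0 := add_le_add (hwAle 0) (hwBle 0)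
      _ = v p (A.coeff 0) + v p (B.coeff 0) := by rw [hfA0, hfB0]
      _ = 0 := hvv
  rw [he2] at hle
  exact lt_irrefl _ (lt_of_lt_of_le hfinal hle)

lemma exists_K_of_crit {a : H p} {δ : ℚ} (G : Polynomial (H p))
    (hcrit : ∀ ℓ : ℕ, 1 ≤ ℓ →
      v p ((Polynomial.taylor a G).coeff 0) < v p ((Polynomial.taylor a G).coeff ℓ)
        + (((ℓ : ℚ) * δ : ℚ) : WithTop ℚ)) :
    ∃ c : H p, c ∈ KNP p ∧ 0 < om p a δ (G * Polynomial.C c - 1) := by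
  set A := Polynomial.taylor a G with hA
  have hA0 : A.coeff 0 ≠ 0 := by
    intro h
    have h1 := hcrit 1 le_rfl
    rw [h] at h1
    simp only [v, HahnSeries.orderTop_zero] at h1
    exact not_top_lt h1
  set o := (A.coeff 0).order with ho
  set u := (A.coeff 0).leadingCoeff with huu
  have hu : u ≠ 0 := HahnSeries.leadingCoeff_ne_zero.mpr hA0
  have hu' : u⁻¹ ≠ 0 := inv_ne_zero hu
  set c : H p := HahnSeries.single (-o) u⁻¹ with hcc
  have hc : c ∈ KNP p := by
    refine ⟨o.den, o.den_pos, fun q' hq' => ?_⟩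
    have hmem := HahnSeries.support_single_subset hq'
    rw [Set.mem_singleton_iff.mp hmem]
    refine ⟨-o.num, ?_⟩
    push_cast
    rw [neg_div, Rat.num_div_den]
  have hvA0 : v p (A.coeff 0) = (o : WithTop ℚ) := v_eq_order hA0
  have hvc : v p c = ((-o : ℚ) : WithTop ℚ) := by
    rw [hcc, v, HahnSeries.orderTop_single hu']
  refine ⟨c, hc, ?_⟩
  rw [om_mul_sub_one_pos_iff]
  have htC : Polynomial.taylor a (Polynomial.C c) = Polynomial.C c := Polynomial.taylor_C a c
  constructor
  · rw [htC, Polynomial.coeff_mul_C, ← hA]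
    apply v_sub_one_pos
    · rw [v_mul, hvA0, hvc, ← WithTop.coe_add]
      norm_num
    · have hordc : c.order = -o := HahnSeries.order_single hu'
      have h00 := HahnSeries.coeff_mul_order_add_order (A.coeff 0) c
      rw [hordc, ← ho, add_neg_cancel] at h00
      rw [h00, ← huu]
      have hlc : c.leadingCoeff = u⁻¹ := by rw [hcc]; exact HahnSeries.leadingCoeff_of_single
      rw [hlc, mul_inv_cancel₀ hu]
  · intro ℓ hℓ
    rw [htC, Polynomial.coeff_mul_C, ← hA, v_mul, hvc]
    have h := hcrit ℓ hℓ
    rw [hvA0] at h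
    have h2 := WithTop.add_lt_add_right (WithTop.coe_ne_top (a := (-o : ℚ))) h
    rw [← WithTop.coe_add, add_neg_cancel] at h2
    rw [add_right_comm] at h2
    exact_mod_cast h2

set_option synthInstance.maxHeartbeats 1000000 in
set_option maxHeartbeats 2000000 in
/-- with `L ⊆ H` the relative algebraic closure of `K` in `H`, for `a ∈ L`,
`δ ∈ ℚ` and a nonzero `g ∈ K[x]`: the initial term of `g` is a unit over `K[x]` iff it is a
unit over `L[x]`; concretely, `∃ h ∈ K[x], ω_{a,δ}(g·h - 1) > 0` iff
`∃ h' ∈ L[x], ω_{a,δ}(g·h' - 1) > 0`. -/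
theorem unit_in_K_iff_unit_in_L (a : H p) (ha : a ∈ algebraicClosure (KNP p) (H p)) (dl : ℚ)
    (g : Polynomial (KNP p)) (hg : g ≠ 0) :
    (∃ h : Polynomial (KNP p),
        0 < om p a dl (g.map (algebraMap (KNP p) (H p)) * h.map (algebraMap (KNP p) (H p)) - 1))
    ↔ (∃ h' : Polynomial (algebraicClosure (KNP p) (H p)),
        0 < om p a dl (g.map (algebraMap (KNP p) (H p))
            * h'.map (algebraMap (algebraicClosure (KNP p) (H p)) (H p)) - 1)) := by
  have key : ∀ Hq : Polynomial (H p),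
      0 < om p a dl (g.map (algebraMap (KNP p) (H p)) * Hq - 1) →
      ∃ h : Polynomial (KNP p),
        0 < om p a dl (g.map (algebraMap (KNP p) (H p))
          * h.map (algebraMap (KNP p) (H p)) - 1) := by
    intro Hq hHq
    rw [om_mul_sub_one_pos_iff] at hHq
    obtain ⟨c, hc, hom⟩ := exists_K_of_crit (g.map (algebraMap (KNP p) (H p)))
      (crit_of_exists hHq.1 hHq.2)
    refine ⟨Polynomial.C ⟨c, hc⟩, ?_⟩
    have hmapC : (Polynomial.C (⟨c, hc⟩ : KNP p)).map (algebraMap (KNP p) (H p))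
        = Polynomial.C c := by
      rw [Polynomial.map_C]; rfl
    rw [hmapC]
    exact hom
  constructor
  · rintro ⟨h, hh⟩
    refine ⟨h.map (algebraMap (KNP p) (algebraicClosure (KNP p) (H p))), ?_⟩
    rw [Polynomial.map_map, ← IsScalarTower.algebraMap_eq]
    exact hh
  · rintro ⟨h', hh'⟩
    exact key _ hh'
end
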